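/- For any positive integer t: if A_4(6t+4, 6, [2,1,1]) equals the upper bound ⌊((6t+4)/2)⌊(6t+3)/3⌋⌋ = (3t+2)(2t+1), then A_4(6t+3, 6, [2,1,1]) equals its upper bound ⌊((6t+3)/2)⌊(6t+2)/3⌋⌋ = 6t²+3t. -/

import Mathlib

open Finset

/-- `u` has composition `w̄`: for each nonzero symbol `j`, exactly `w j` coordinates equal `j`. -/
def HasComposition {q : ℕ} {X : Type*} [Fintype X] [DecidableEq X]
    (w : ZMod q → ℕ) (u : X → ZMod q) : Prop :=
  ∀ j : ZMod q, j ≠ 0 → (Finset.univ.filter fun x => u x = j).card = w j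

/-- A constant-composition code with composition `w̄` and minimum distance `d`. -/
def IsCCCode (q d : ℕ) (w : ZMod q → ℕ) {X : Type*} [Fintype X] [DecidableEq X]
    (C : Finset (X → ZMod q)) : Prop :=
  (∀ u ∈ C, HasComposition w u) ∧
  ∀ u ∈ C, ∀ v ∈ C, u ≠ v → d ≤ hammingDist u v

/-- `A_q(n,d,w̄)`: the maximum size of an `(n,d,w̄)_q` constant-composition code. -/
noncomputable def maxCCC (q n d : ℕ) (w : ZMod q → ℕ) : ℕ :=
  sSup {s | ∃ C : Finset (Fin n → ZMod q), IsCCCode q d w C ∧ C.card = s}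

/-- The composition `[2,1,1]` for quaternary codes: two 1's, one 2, one 3. -/
def w211 : ZMod 4 → ℕ :=
  fun j => if j = 1 then 2 else if j = 2 then 1 else if j = 3 then 1 else 0

lemma zmod4_ne_zero : ∀ a : ZMod 4, a ≠ 0 ↔ a = 1 ∨ a = 2 ∨ a = 3 := by decide

lemma supp_card {X : Type*} [Fintype X] [DecidableEq X] {u : X → ZMod 4}
    (hu : HasComposition w211 u) : (univ.filter fun z => u z ≠ 0).card = 4 := by
  have h1 := hu 1 (by decide)
  have h2 := hu 2 (by decide)
  have h3 := hu 3 (by decide)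
  have e : (univ.filter fun z => u z ≠ 0) =
      ((univ.filter fun z => u z = 1) ∪ (univ.filter fun z => u z = 2)) ∪
        (univ.filter fun z => u z = 3) := by
    ext z
    simp only [mem_filter, mem_union, mem_univ, true_and, zmod4_ne_zero (u z)]
    tauto
  have d12 : Disjoint (univ.filter fun z => u z = 1) (univ.filter fun z => u z = 2) := by
    rw [disjoint_left]; intro z hz1 hz2
    simp only [mem_filter] at hz1 hz2
    rw [hz1.2] at hz2; exact absurd hz2.2 (by decide)
  have d123 : Disjoint ((univ.filter fun z => u z = 1) ∪ (univ.filter fun z => u z = 2))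
      (univ.filter fun z => u z = 3) := by
    rw [disjoint_left]; intro z hz1 hz2
    simp only [mem_filter, mem_union] at hz1 hz2
    rcases hz1 with h | h <;> rw [h.2] at hz2
    · exact absurd hz2.2 (by decide)
    · exact absurd hz2.2 (by decide)
  rw [e, card_union_of_disjoint d123, card_union_of_disjoint d12, h1, h2, h3]
  decide

lemma tails_disjoint {X : Type*} [Fintype X] [DecidableEq X] {C : Finset (X → ZMod 4)}
    (hC : IsCCCode 4 6 w211 C) {u v : X → ZMod 4} (hu : u ∈ C) (hv : v ∈ C) (huv : u ≠ v)
    {x : X} (hux : u x = 1) (hvx : v x = 1) :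
    Disjoint ((univ.filter fun z => u z ≠ 0).erase x) ((univ.filter fun z => v z ≠ 0).erase x) := by
  rw [disjoint_left]
  rintro y hyu hyv
  have hyx : y ≠ x := (mem_erase.mp hyu).1
  have hyu' : u y ≠ 0 := (mem_filter.mp (mem_erase.mp hyu).2).2
  have hyv' : v y ≠ 0 := (mem_filter.mp (mem_erase.mp hyv).2).2
  have hd : 6 ≤ hammingDist u v := hC.2 u hu v hv huv
  set U := univ.filter fun z => u z ≠ 0 with hU
  set V := univ.filter fun z => v z ≠ 0 with hV
  have hcu : U.card = 4 := supp_card (hC.1 u hu)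
  have hcv : V.card = 4 := supp_card (hC.1 v hv)
  have hxU : x ∈ U := by simp [hU, hux]; decide
  have hxV : x ∈ V := by simp [hV, hvx]; decide
  have hyU : y ∈ U := by simp [hU, hyu']
  have hyV : y ∈ V := by simp [hV, hyv']
  have hsub2 : ({x, y} : Finset X) ⊆ U ∩ V := by
    intro z hz
    simp only [mem_insert, mem_singleton] at hz
    rcases hz with rfl | rfl <;> simp [mem_inter, *] <;> decide
  have hcard2 : 2 ≤ (U ∩ V).card := by
    calc 2 = ({x, y} : Finset X).card := by
            rw [card_insert_of_notMem (by simp [Ne.symm hyx]), card_singleton]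
      _ ≤ (U ∩ V).card := card_le_card hsub2
  have hUV : (U ∪ V).card ≤ 6 := by
    have := card_union_add_card_inter U V
    omega
  have hDsub : (univ.filter fun z => u z ≠ v z) ⊆ (U ∪ V).erase x := by
    intro z hz
    rw [mem_filter] at hz
    rw [mem_erase, mem_union]
    constructor
    · rintro rfl; rw [hux, hvx] at hz; exact hz.2 rfl
    · by_contra hc
      push_neg at hc
      simp only [hU, hV, mem_filter, mem_univ, true_and, not_not] at hc
      rw [hc.1, hc.2] at hz; exact hz.2 rfl
  have hdist : hammingDist u v = (univ.filter fun z => u z ≠ v z).card := rfl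
  by_cases heq : u y = v y
  · have hDsub2 : (univ.filter fun z => u z ≠ v z) ⊆ ((U ∪ V).erase x).erase y := by
      intro z hz
      rw [mem_erase]
      refine ⟨?_, hDsub hz⟩
      rintro rfl
      exact (mem_filter.mp hz).2 heq
    have : hammingDist u v ≤ (((U ∪ V).erase x).erase y).card := by
      rw [hdist]; exact card_le_card hDsub2
    have h1 : (((U ∪ V).erase x).erase y).card ≤ 4 := by
      rw [card_erase_of_mem (by rw [mem_erase]; exact ⟨hyx, mem_union.mpr (Or.inl hyU)⟩),
        card_erase_of_mem (mem_union.mpr (Or.inl hxU))]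
      omega
    omega
  · have : hammingDist u v ≤ ((U ∪ V).erase x).card := by
      rw [hdist]; exact card_le_card hDsub
    have h1 : ((U ∪ V).erase x).card ≤ 5 := by
      rw [card_erase_of_mem (mem_union.mpr (Or.inl hxU))]
      omega
    omega

lemma count_one_le {X : Type*} [Fintype X] [DecidableEq X] {C : Finset (X → ZMod 4)}
    (hC : IsCCCode 4 6 w211 C) (x : X) :
    3 * (C.filter fun u => u x = 1).card ≤ Fintype.card X - 1 := by
  set G := C.filter fun u => u x = 1 with hG
  have key : (G.biUnion fun u => (univ.filter fun z => u z ≠ 0).erase x).card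
      = 3 * G.card := by
    rw [card_biUnion]
    · rw [Finset.sum_congr rfl (fun u hu => ?_), Finset.sum_const, smul_eq_mul, mul_comm]
      have huC : u ∈ C := (mem_filter.mp hu).1
      have hux : u x = 1 := (mem_filter.mp hu).2
      have : x ∈ univ.filter fun z => u z ≠ 0 := by simp [hux]; decide
      rw [card_erase_of_mem this, supp_card (hC.1 u huC)]
    · intro u hu v hv huv
      exact tails_disjoint hC (mem_filter.mp hu).1 (mem_filter.mp hv).1 huv
        (mem_filter.mp hu).2 (mem_filter.mp hv).2
  have hsub : (G.biUnion fun u => (univ.filter fun z => u z ≠ 0).erase x) ⊆ univ.erase x := by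
    intro z hz
    rw [mem_biUnion] at hz
    obtain ⟨u, _, hz⟩ := hz
    exact mem_erase.mpr ⟨(mem_erase.mp hz).1, mem_univ z⟩
  calc 3 * G.card = (G.biUnion fun u => (univ.filter fun z => u z ≠ 0).erase x).card := key.symm
    _ ≤ (univ.erase x).card := card_le_card hsub
    _ = Fintype.card X - 1 := by rw [card_erase_of_mem (mem_univ x), card_univ]

lemma two_card_eq {X : Type*} [Fintype X] [DecidableEq X] {C : Finset (X → ZMod 4)}
    (hC : IsCCCode 4 6 w211 C) :
    ∑ x : X, (C.filter fun u => u x = 1).card = 2 * C.card := by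
  have : ∀ x : X, (C.filter fun u => u x = 1).card = ∑ u ∈ C, if u x = 1 then 1 else 0 := by
    intro x; rw [card_filter]
  simp_rw [this]
  rw [Finset.sum_comm]
  rw [Finset.sum_congr rfl (fun u hu => ?_), Finset.sum_const, smul_eq_mul, mul_comm]
  have h1 := hC.1 u hu 1 (by decide)
  rw [← card_filter]
  simpa [w211] using h1

lemma nonzero_count_eq {X : Type*} [Fintype X] [DecidableEq X] {C : Finset (X → ZMod 4)}
    (hC : IsCCCode 4 6 w211 C) :
    ∑ x : X, (C.filter fun u => u x ≠ 0).card = 4 * C.card := by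
  have : ∀ x : X, (C.filter fun u => u x ≠ 0).card = ∑ u ∈ C, if u x ≠ 0 then 1 else 0 := by
    intro x; rw [card_filter]
  simp_rw [this]
  rw [Finset.sum_comm]
  rw [Finset.sum_congr rfl (fun u hu => ?_), Finset.sum_const, smul_eq_mul, mul_comm]
  rw [← card_filter]
  exact supp_card (hC.1 u hu)

lemma upper_bound (t : ℕ) {C : Finset (Fin (6 * t + 3) → ZMod 4)}
    (hC : IsCCCode 4 6 w211 C) : C.card ≤ 6 * t ^ 2 + 3 * t := by
  have h2 : 2 * C.card = ∑ x : Fin (6 * t + 3), (C.filter fun u => u x = 1).card :=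
    (two_card_eq hC).symm
  have hle : ∀ x : Fin (6 * t + 3), (C.filter fun u => u x = 1).card ≤ 2 * t := by
    intro x
    clear h2
    have := count_one_le hC x
    rw [Fintype.card_fin] at this
    generalize (C.filter fun u => u x = 1).card = N at *
    omega
  have : ∑ x : Fin (6 * t + 3), (C.filter fun u => u x = 1).card
      ≤ ∑ _x : Fin (6 * t + 3), 2 * t := Finset.sum_le_sum fun x _ => hle x
  rw [Finset.sum_const, card_univ, Fintype.card_fin, smul_eq_mul] at this
  nlinarith [this, h2]

lemma filter_comp_equiv_card {α β : Type*} [Fintype α] [Fintype β] [DecidableEq α]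
    [DecidableEq β] (e : α ≃ β) (p : β → Prop) [DecidablePred p] :
    (univ.filter fun y => p (e y)).card = (univ.filter p).card :=
  card_equiv e (by simp)

lemma comp_equiv_injective {n : ℕ} (e : Equiv.Perm (Fin n)) :
    Function.Injective (fun u : Fin n → ZMod 4 => u ∘ e) := by
  intro u v huv
  funext z
  have := congrFun huv (e.symm z)
  simpa using this

lemma hammingDist_comp_equiv {n : ℕ} (e : Equiv.Perm (Fin n)) (u v : Fin n → ZMod 4) :
    hammingDist (u ∘ e) (v ∘ e) = hammingDist u v := by
  show (univ.filter fun y => u (e y) ≠ v (e y)).card = (univ.filter fun z => u z ≠ v z).card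
  exact filter_comp_equiv_card e (fun z => u z ≠ v z)

lemma isCCCode_comp_equiv {n : ℕ} {C : Finset (Fin n → ZMod 4)}
    (hC : IsCCCode 4 6 w211 C) (e : Equiv.Perm (Fin n)) :
    IsCCCode 4 6 w211 (C.image fun u => u ∘ e) := by
  constructor
  · rintro w hw j hj
    rw [mem_image] at hw
    obtain ⟨u, hu, rfl⟩ := hw
    have := hC.1 u hu j hj
    rw [← this]
    exact filter_comp_equiv_card e (fun z => u z = j)
  · rintro w hw w' hw' hne
    rw [mem_image] at hw hw'
    obtain ⟨u, hu, rfl⟩ := hw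
    obtain ⟨v, hv, rfl⟩ := hw'
    rw [hammingDist_comp_equiv]
    exact hC.2 u hu v hv (fun h => hne (by rw [h]))

lemma shorten_code {n : ℕ} {C : Finset (Fin (n + 1) → ZMod 4)}
    (hC : IsCCCode 4 6 w211 C) :
    ∃ C' : Finset (Fin n → ZMod 4), IsCCCode 4 6 w211 C' ∧
      C'.card = (C.filter fun u => u (Fin.last n) = 0).card := by
  set C₀ := C.filter fun u => u (Fin.last n) = 0 with hC₀
  have hinj : Set.InjOn (fun u : Fin (n+1) → ZMod 4 => u ∘ Fin.castSucc) C₀ := by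
    intro u hu v hv huv
    rw [hC₀, coe_filter] at hu hv
    funext z
    induction z using Fin.lastCases with
    | last => rw [hu.2, hv.2]
    | cast i => exact congrFun huv i
  have hbij : ∀ u : Fin (n+1) → ZMod 4, u (Fin.last n) = 0 → ∀ p : ZMod 4 → Prop,
      ¬ p 0 → ∀ inst : DecidablePred p,
      (univ.filter fun y : Fin n => p (u y.castSucc)).card
        = (univ.filter fun z : Fin (n+1) => p (u z)).card := by
    intro u hu p hp inst
    refine card_bij (fun y _ => y.castSucc) (fun y hy => ?_) (fun y₁ _ y₂ _ h => ?_)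
      (fun z hz => ?_)
    · rw [mem_filter] at hy ⊢; exact ⟨mem_univ _, hy.2⟩
    · exact Fin.castSucc_injective n h
    · rw [mem_filter] at hz
      have hzl : z ≠ Fin.last n := by
        rintro rfl; rw [hu] at hz; exact hp hz.2
      refine ⟨z.castPred hzl, ?_, by simp⟩
      rw [mem_filter]
      exact ⟨mem_univ _, by rw [Fin.castSucc_castPred]; exact hz.2⟩
  refine ⟨C₀.image (fun u => u ∘ Fin.castSucc), ⟨?_, ?_⟩, card_image_of_injOn hinj⟩
  · rintro w hw j hj
    rw [mem_image] at hw
    obtain ⟨u, hu, rfl⟩ := hw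
    rw [hC₀, mem_filter] at hu
    have := hbij u hu.2 (fun a => a = j) (fun h => hj h.symm) (fun a => inferInstanceAs (Decidable (a = j)))
    show (univ.filter fun y : Fin n => u y.castSucc = j).card = w211 j
    rw [this]
    exact hC.1 u hu.1 j hj
  · rintro w hw w' hw' hne
    rw [mem_image] at hw hw'
    obtain ⟨u, hu, rfl⟩ := hw
    obtain ⟨v, hv, rfl⟩ := hw'
    rw [hC₀, mem_filter] at hu hv
    have hdist : hammingDist (u ∘ Fin.castSucc) (v ∘ Fin.castSucc) = hammingDist u v := by
      show (univ.filter fun y : Fin n => u y.castSucc ≠ v y.castSucc).card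
        = (univ.filter fun z => u z ≠ v z).card
      refine card_bij (fun y _ => y.castSucc) (fun y hy => ?_) (fun y₁ _ y₂ _ h => ?_)
        (fun z hz => ?_)
      · rw [mem_filter] at hy ⊢; exact ⟨mem_univ _, hy.2⟩
      · exact Fin.castSucc_injective n h
      · rw [mem_filter] at hz
        have hzl : z ≠ Fin.last n := by
          rintro rfl; rw [hu.2, hv.2] at hz; exact hz.2 rfl
        refine ⟨z.castPred hzl, ?_, by simp⟩
        rw [mem_filter]
        exact ⟨mem_univ _, by rw [Fin.castSucc_castPred]; exact hz.2⟩
    rw [hdist]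
    have huv : u ≠ v := by
      rintro rfl; exact hne rfl
    exact hC.2 u hu.1 v hv.1 huv

lemma isCCCode_empty (n : ℕ) : IsCCCode 4 6 w211 (∅ : Finset (Fin n → ZMod 4)) :=
  ⟨fun u hu => absurd hu (notMem_empty u), fun u hu => absurd hu (notMem_empty u)⟩

lemma maxCCC_S_nonempty (n : ℕ) :
    {s | ∃ C : Finset (Fin n → ZMod 4), IsCCCode 4 6 w211 C ∧ C.card = s}.Nonempty :=
  ⟨0, ∅, isCCCode_empty n, card_empty⟩

lemma maxCCC_S_bdd (n : ℕ) :
    BddAbove {s | ∃ C : Finset (Fin n → ZMod 4), IsCCCode 4 6 w211 C ∧ C.card = s} := by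
  refine ⟨Fintype.card (Fin n → ZMod 4), ?_⟩
  rintro s ⟨C, _, rfl⟩
  exact card_le_univ C

lemma maxCCC_mem (n : ℕ) : ∃ C : Finset (Fin n → ZMod 4),
    IsCCCode 4 6 w211 C ∧ C.card = maxCCC 4 n 6 w211 :=
  Nat.sSup_mem (maxCCC_S_nonempty n) (maxCCC_S_bdd n)

lemma le_maxCCC {n : ℕ} {C : Finset (Fin n → ZMod 4)} (hC : IsCCCode 4 6 w211 C) :
    C.card ≤ maxCCC 4 n 6 w211 :=
  le_csSup (maxCCC_S_bdd n) ⟨C, hC, rfl⟩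

lemma maxCCC_le {n b : ℕ} (hb : ∀ C : Finset (Fin n → ZMod 4), IsCCCode 4 6 w211 C → C.card ≤ b) :
    maxCCC 4 n 6 w211 ≤ b := by
  refine csSup_le (maxCCC_S_nonempty n) ?_
  rintro s ⟨C, hC, rfl⟩
  exact hb C hC


/-- Shortening: if `A_4(6t+4,6,[2,1,1]) = (3t+2)(2t+1)` meets its upper bound,
then `A_4(6t+3,6,[2,1,1]) = 6t²+3t` meets its upper bound. -/
theorem maxCCC_six_t_add_three_of_six_t_add_four (t : ℕ) (ht : 1 ≤ t)
    (h : maxCCC 4 (6 * t + 4) 6 w211 = (3 * t + 2) * (2 * t + 1)) :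
    maxCCC 4 (6 * t + 3) 6 w211 = 6 * t ^ 2 + 3 * t := by
  refine le_antisymm (maxCCC_le fun C hC => upper_bound t hC) ?_
  -- get an optimal code at length 6t+4
  obtain ⟨D, hD, hDcard⟩ := maxCCC_mem (6 * t + 4)
  rw [h] at hDcard
  -- find a coordinate with few nonzero entries
  have hsum := nonzero_count_eq hD
  have hex : ∃ x : Fin (6 * t + 4), (D.filter fun u => u x ≠ 0).card ≤ 4 * t + 2 := by
    by_contra hx
    push_neg at hx
    have h1 : ∑ x : Fin (6 * t + 4), (4 * t + 3)
        ≤ ∑ x : Fin (6 * t + 4), (D.filter fun u => u x ≠ 0).card :=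
      Finset.sum_le_sum fun x _ => hx x
    rw [hsum, Finset.sum_const, card_univ, Fintype.card_fin, smul_eq_mul, hDcard] at h1
    nlinarith [h1]
  obtain ⟨x, hx⟩ := hex
  -- swap coordinate x to the last position
  set e : Equiv.Perm (Fin (6 * t + 3 + 1)) := Equiv.swap x (Fin.last (6 * t + 3)) with he
  set D' : Finset (Fin (6 * t + 3 + 1) → ZMod 4) := D.image (fun u => u ∘ e) with hD'def
  have hD' : IsCCCode 4 6 w211 D' := isCCCode_comp_equiv hD e
  have hD'card : D'.card = D.card := card_image_of_injective D (comp_equiv_injective e)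
  have hlastx : e (Fin.last (6 * t + 3)) = x := Equiv.swap_apply_right x (Fin.last (6 * t + 3))
  have hN : (D'.filter fun w => w (Fin.last (6 * t + 3)) ≠ 0).card
      = (D.filter fun u => u x ≠ 0).card := by
    rw [hD'def, filter_image]
    rw [card_image_of_injective _ (comp_equiv_injective e)]
    congr 1
    apply filter_congr
    intro u _
    rw [Function.comp_apply, hlastx]
  have hsplit := card_filter_add_card_filter_not
    (s := D') (p := fun w => w (Fin.last (6 * t + 3)) = 0)
  obtain ⟨C', hC', hC'card⟩ := shorten_code hD'
  have hge : 6 * t ^ 2 + 3 * t ≤ C'.card := by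
    have hprod : (3 * t + 2) * (2 * t + 1) = 6 * t ^ 2 + 7 * t + 2 := by ring
    have hNle : (D'.filter fun w => w (Fin.last (6 * t + 3)) ≠ 0).card ≤ 4 * t + 2 := by
      rw [hN]; exact hx
    have h1 : (D'.filter fun w => w (Fin.last (6 * t + 3)) = 0).card
        + (D'.filter fun w => w (Fin.last (6 * t + 3)) ≠ 0).card = D'.card := by
      simpa using hsplit
    rw [hD'card, hDcard, hprod] at h1
    rw [hC'card]
    linarith [h1, hNle]
  calc 6 * t ^ 2 + 3 * t ≤ C'.card := hge
    _ ≤ maxCCC 4 (6 * t + 3) 6 w211 := le_maxCCC hC'
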